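/- Let B be a k×k real skew-symmetric matrix (B = −Bᵀ). Then there exists z ∈ ℝ^k with z ≥ 0, Bz ≤ 0, and z − Bz > 0 (every component of z − Bz strictly positive). -/

import Mathlib

variable {E : Type*} [NormedAddCommGroup E] [NormedSpace ℝ E] [FiniteDimensional ℝ E]

theorem isClosed_coneSet {ι : Type*} [Fintype ι] [DecidableEq ι] (A : ι → E) (s : Finset ι) :
    IsClosed {x : E | ∃ μ : ι → ℝ, (∀ j ∈ s, 0 ≤ μ j) ∧ x = ∑ j ∈ s, μ j • A j} := by
  induction s using Finset.strongInduction with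
  | _ s ih =>
  by_cases hli : LinearIndependent ℝ (fun j : ↥s => A ↑j)
  · set L : (↥s → ℝ) →ₗ[ℝ] E :=
      { toFun := fun μ => ∑ j : ↥s, μ j • A ↑j
        map_add' := by intro a b; simp [add_smul, Finset.sum_add_distrib]
        map_smul' := by intro c a; simp [smul_smul, Finset.smul_sum]
        } with hL
    have hker : LinearMap.ker L = ⊥ := by
      rw [LinearMap.ker_eq_bot']
      intro m hm
      exact funext (Fintype.linearIndependent_iff.mp hli m hm)
    have hce := LinearMap.isClosedEmbedding_of_injective (f := L) hker
    have hset : {x : E | ∃ μ : ι → ℝ, (∀ j ∈ s, 0 ≤ μ j) ∧ x = ∑ j ∈ s, μ j • A j}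
        = L '' {μ : ↥s → ℝ | ∀ j, 0 ≤ μ j} := by
      ext x
      constructor
      · rintro ⟨μ, hμ, rfl⟩
        refine ⟨fun j => μ ↑j, fun j => hμ ↑j j.2, ?_⟩
        simp only [hL, LinearMap.coe_mk, AddHom.coe_mk]
        rw [← Finset.sum_attach s (fun j => μ j • A j)]
        rfl
      · rintro ⟨ν, hν, rfl⟩
        refine ⟨fun j => if h : j ∈ s then ν ⟨j, h⟩ else 0, fun j hj => by simp [hj, hν _], ?_⟩
        simp only [hL, LinearMap.coe_mk, AddHom.coe_mk]
        rw [← Finset.sum_attach s (fun j => (if h : j ∈ s then ν ⟨j, h⟩ else 0) • A j)]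
        exact Finset.sum_congr rfl (fun j _ => by simp [j.2])
    rw [hset]
    refine hce.isClosedMap _ ?_
    have : {μ : ↥s → ℝ | ∀ j, 0 ≤ μ j} = ⋂ j, {μ : ↥s → ℝ | 0 ≤ μ j} := by
      ext; simp [Set.mem_iInter]
    rw [this]
    exact isClosed_iInter fun j => isClosed_le continuous_const (continuous_apply j)
  · -- dependent case: find relation c supported on s with a negative entry
    obtain ⟨g, hgsum, j₁, hgj⟩ := Fintype.not_linearIndependent_iff.mp hli
    obtain ⟨c, hcsum, hcneg⟩ : ∃ c : ι → ℝ,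
        (∑ j ∈ s, c j • A j) = 0 ∧ ∃ j ∈ s, c j < 0 := by
      set c₀ : ι → ℝ := fun j => if h : j ∈ s then g ⟨j, h⟩ else 0 with hc₀
      have hsum₀ : (∑ j ∈ s, c₀ j • A j) = 0 := by
        rw [← Finset.sum_attach s (fun j => c₀ j • A j)]
        rw [← hgsum]
        exact Finset.sum_congr rfl (fun j _ => by simp [hc₀, j.2])
      by_cases hneg : ∃ j ∈ s, c₀ j < 0
      · exact ⟨c₀, hsum₀, hneg⟩
      · refine ⟨-c₀, by simp only [Pi.neg_apply, neg_smul, Finset.sum_neg_distrib, hsum₀, neg_zero], ⟨↑j₁, j₁.2, ?_⟩⟩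
        push_neg at hneg
        have h1 : c₀ ↑j₁ ≠ 0 := by simp [hc₀, j₁.2]; exact hgj
        have := hneg ↑j₁ j₁.2
        simp only [Pi.neg_apply, neg_neg, neg_lt_zero]
        exact lt_of_le_of_ne this (Ne.symm h1)
    classical
    have hsub : {x : E | ∃ μ : ι → ℝ, (∀ j ∈ s, 0 ≤ μ j) ∧ x = ∑ j ∈ s, μ j • A j}
        = ⋃ j ∈ (s.filter (fun j => c j < 0)),
          {x : E | ∃ μ : ι → ℝ, (∀ l ∈ s.erase j, 0 ≤ μ l) ∧ x = ∑ l ∈ s.erase j, μ l • A l} := by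
      ext x
      simp only [Set.mem_iUnion, Set.mem_setOf_eq, exists_prop]
      constructor
      · rintro ⟨μ, hμ, rfl⟩
        have hFne : (s.filter (fun j => c j < 0)).Nonempty := by
          obtain ⟨j, hj, hjneg⟩ := hcneg
          exact ⟨j, Finset.mem_filter.mpr ⟨hj, hjneg⟩⟩
        obtain ⟨j₀, hj₀F, hj₀min⟩ := Finset.exists_min_image _ (fun j => μ j / (-c j)) hFne
        obtain ⟨hj₀s, hj₀neg⟩ := Finset.mem_filter.mp hj₀F
        set t : ℝ := μ j₀ / (-c j₀) with ht
        have ht0 : 0 ≤ t := div_nonneg (hμ _ hj₀s) (by linarith)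
        set ν : ι → ℝ := fun j => μ j + t * c j with hν
        have hν0 : ∀ j ∈ s, 0 ≤ ν j := by
          intro j hj
          rcases lt_or_ge (c j) 0 with h | h
          · have := hj₀min j (Finset.mem_filter.mpr ⟨hj, h⟩)
            have h2 : t * (-c j) ≤ μ j / (-c j) * (-c j) :=
              mul_le_mul_of_nonneg_right this (by linarith)
            rw [div_mul_cancel₀ _ (by linarith : (-c j) ≠ 0)] at h2
            simp only [hν]; nlinarith
          · have : 0 ≤ t * c j := mul_nonneg ht0 h
            have := hμ j hj
            simp only [hν]; linarith
        have hνj₀ : ν j₀ = 0 := by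
          have hc0 : c j₀ ≠ 0 := ne_of_lt hj₀neg
          simp only [hν, ht]
          rw [div_neg, neg_mul, div_mul_cancel₀ _ hc0]
          simp
        refine ⟨j₀, hj₀F, ν, fun l hl => hν0 l (Finset.mem_of_mem_erase hl), ?_⟩
        have hsums : (∑ j ∈ s, ν j • A j) = ∑ j ∈ s, μ j • A j := by
          simp only [hν, add_smul, Finset.sum_add_distrib, mul_smul]
          rw [← Finset.smul_sum, hcsum, smul_zero, add_zero]
        rw [← hsums, ← Finset.add_sum_erase s _ hj₀s, hνj₀, zero_smul, zero_add]
      · rintro ⟨j₀, hj₀F, μ, hμ, rfl⟩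
        obtain ⟨hj₀s, _⟩ := Finset.mem_filter.mp hj₀F
        refine ⟨Function.update μ j₀ 0, ?_, ?_⟩
        · intro j hj
          rcases eq_or_ne j j₀ with rfl | hne
          · simp
          · rw [Function.update_of_ne hne]
            exact hμ j (Finset.mem_erase.mpr ⟨hne, hj⟩)
        · rw [← Finset.add_sum_erase s _ hj₀s]
          simp only [Function.update_self, zero_smul, zero_add]
          exact (Finset.sum_congr rfl (fun l hl =>
            by rw [Function.update_of_ne (Finset.mem_erase.mp hl).1])).symm
    rw [hsub]
    exact Set.Finite.isClosed_biUnion (Finset.finite_toSet _)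
      (fun j hj => ih _ (Finset.erase_ssubset (Finset.mem_filter.mp hj).1))



open scoped InnerProductSpace in
theorem cone_alternative {E : Type*} [NormedAddCommGroup E] [InnerProductSpace ℝ E]
    [FiniteDimensional ℝ E] {ι : Type*} [Fintype ι] [DecidableEq ι] (A : ι → E) (b : E) :
    (∃ μ : ι → ℝ, (∀ j, 0 ≤ μ j) ∧ b = ∑ j, μ j • A j) ∨
    (∃ y : E, (∀ j, 0 ≤ ⟪A j, y⟫_ℝ) ∧ ⟪y, b⟫_ℝ < 0) := by
  set C : Set E := {x : E | ∃ μ : ι → ℝ, (∀ j ∈ Finset.univ, 0 ≤ μ j) ∧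
    x = ∑ j ∈ Finset.univ, μ j • A j} with hC
  by_cases hb : b ∈ C
  · obtain ⟨μ, hμ, rfl⟩ := hb
    exact Or.inl ⟨μ, fun j => hμ j (Finset.mem_univ j), rfl⟩
  · refine Or.inr ?_
    set K : ConvexCone ℝ E :=
      { carrier := C
        smul_mem' := by
          rintro c hc x ⟨μ, hμ, rfl⟩
          refine ⟨c • μ, fun j _ => mul_nonneg hc.le (hμ j (Finset.mem_univ j)), ?_⟩
          rw [Finset.smul_sum]
          exact Finset.sum_congr rfl fun j _ => by simp [smul_smul]
        add_mem' := by
          rintro x ⟨μ, hμ, rfl⟩ y ⟨ν, hν, rfl⟩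
          refine ⟨μ + ν, fun j _ => add_nonneg (hμ j (Finset.mem_univ j)) (hν j (Finset.mem_univ j)), ?_⟩
          rw [← Finset.sum_add_distrib]
          exact Finset.sum_congr rfl fun j _ => by simp [add_smul] } with hK
    have hne : (K : Set E).Nonempty := ⟨0, ⟨0, fun j _ => le_refl 0, by simp⟩⟩
    have hcl : IsClosed (K : Set E) := isClosed_coneSet A Finset.univ
    obtain ⟨y, hy1, hy2⟩ : ∃ y : E, (∀ x ∈ K, 0 ≤ ⟪x, y⟫_ℝ) ∧ ⟪y, b⟫_ℝ < 0 := by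
      let P : ProperCone ℝ E :=
        { carrier := C
          add_mem' := fun hx hy => K.add_mem' hx hy
          zero_mem' := ⟨0, fun j _ => le_refl 0, by simp⟩
          smul_mem' := by
            rintro c x ⟨μ, hμ, rfl⟩
            refine ⟨(c : ℝ) • μ, fun j _ => mul_nonneg c.2 (hμ j (Finset.mem_univ j)), ?_⟩
            change (c : ℝ) • (∑ j, μ j • A j : E) = _
            rw [Finset.smul_sum]
            exact Finset.sum_congr rfl fun j _ => by simp [smul_smul]
          isClosed' := hcl }
      obtain ⟨y, h1, h2⟩ := ProperCone.hyperplane_separation' P hb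
      exact ⟨y, h1, by rwa [real_inner_comm]⟩
    refine ⟨y, fun j => ?_, hy2⟩
    refine hy1 (A j) ⟨fun l => if l = j then 1 else 0, fun l _ => by positivity, ?_⟩
    simp [ite_smul]



open scoped InnerProductSpace

theorem tucker_aux (k : ℕ) (B : Matrix (Fin k) (Fin k) ℝ) (hB : B = -B.transpose) (i : Fin k) :
    ∃ x : Fin k → ℝ, (∀ j, 0 ≤ x j) ∧ (∀ j, B.mulVec x j ≤ 0) ∧
      (0 < x i ∨ B.mulVec x i < 0) := by
  classical
  have hskew : ∀ l j, B l j = -B j l := by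
    intro l j
    have := congrFun (congrFun hB l) j
    simpa [Matrix.neg_apply, Matrix.transpose_apply] using this
  let A : Fin k ⊕ Fin k → EuclideanSpace ℝ (Fin k) := fun j => match j with
    | Sum.inl j => (WithLp.equiv 2 (Fin k → ℝ)).symm (fun l => if l = j then 1 else 0)
    | Sum.inr j => (WithLp.equiv 2 (Fin k → ℝ)).symm (fun l => -B j l)
  let b : EuclideanSpace ℝ (Fin k) := (WithLp.equiv 2 (Fin k → ℝ)).symm (fun l => -(if l = i then 1 else 0))
  let π : Fin k → (EuclideanSpace ℝ (Fin k) →ₗ[ℝ] ℝ) := fun l =>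
    { toFun := fun x => (WithLp.equiv 2 (Fin k → ℝ)) x l
      map_add' := fun _ _ => rfl
      map_smul' := fun _ _ => rfl }
  have hπ : ∀ l (f : Fin k → ℝ), π l ((WithLp.equiv 2 (Fin k → ℝ)).symm f) = f l :=
    fun _ _ => rfl
  rcases cone_alternative A b with ⟨μ, hμ, hbeq⟩ | ⟨y, hy1, hy2⟩
  · set u : Fin k → ℝ := fun l => μ (Sum.inl l) with hu
    set v : Fin k → ℝ := fun j => μ (Sum.inr j) with hv
    have hcomp : ∀ l, -(if l = i then (1:ℝ) else 0) = u l + ∑ j, v j * (-B j l) := by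
      intro l
      have h0 := congrArg (π l) hbeq
      rw [map_sum] at h0
      simp only [map_smul, smul_eq_mul, Fintype.sum_sum_type] at h0
      rw [hπ] at h0
      have h1 : ∀ j : Fin k, π l (A (Sum.inl j)) = if l = j then 1 else 0 := fun j => rfl
      have h2 : ∀ j : Fin k, π l (A (Sum.inr j)) = -B j l := fun j => rfl
      simp only [h1, h2, mul_ite, mul_one, mul_zero] at h0
      rw [Finset.sum_ite_eq Finset.univ l (fun j => μ (Sum.inl j))] at h0
      simp only [Finset.mem_univ, if_true] at h0
      exact h0
    have hBv : ∀ l, B.mulVec v l = -u l - (if l = i then 1 else 0) := by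
      intro l
      have h1 : B.mulVec v l = ∑ j, v j * (-B j l) := by
        rw [Matrix.mulVec, dotProduct]
        exact Finset.sum_congr rfl fun j _ => by rw [hskew l j]; ring
      have := hcomp l
      rw [h1]; linarith
    refine ⟨v, fun j => hμ (Sum.inr j), fun l => ?_, Or.inr ?_⟩
    · rw [hBv l]
      have h4 : 0 ≤ u l := hμ (Sum.inl l)
      split <;> linarith
    · rw [hBv i, if_pos rfl]
      have h4 : 0 ≤ u i := hμ (Sum.inl i)
      linarith
  · set x : Fin k → ℝ := fun l => (WithLp.equiv 2 (Fin k → ℝ)) y l with hx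
    have hinner : ∀ w : EuclideanSpace ℝ (Fin k), ⟪w, y⟫_ℝ = ∑ l, (WithLp.equiv 2 (Fin k → ℝ)) w l * x l := by
      intro w
      simp [PiLp.inner_apply, RCLike.inner_apply, conj_trivial, hx]
      exact Finset.sum_congr rfl fun _ _ => mul_comm _ _
    have hxnn : ∀ j, 0 ≤ x j := by
      intro j
      have h := hy1 (Sum.inl j)
      rw [hinner] at h
      have h1 : ∀ l : Fin k, (WithLp.equiv 2 (Fin k → ℝ)) (A (Sum.inl j)) l
          = if l = j then 1 else 0 := fun l => rfl
      simp only [h1, ite_mul, one_mul, zero_mul] at h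
      rwa [Finset.sum_ite_eq' Finset.univ j x, if_pos (Finset.mem_univ j)] at h
    have hBx : ∀ j, B.mulVec x j ≤ 0 := by
      intro j
      have h := hy1 (Sum.inr j)
      rw [hinner] at h
      have h1 : ∀ l : Fin k, (WithLp.equiv 2 (Fin k → ℝ)) (A (Sum.inr j)) l = -B j l :=
        fun l => rfl
      simp only [h1] at h
      have h2 : ∑ l, -B j l * x l = -∑ l, B j l * x l := by
        rw [← Finset.sum_neg_distrib]
        exact Finset.sum_congr rfl fun l _ => by ring
      rw [h2] at h
      have h3 : B.mulVec x j = ∑ l, B j l * x l := by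
        rw [Matrix.mulVec, dotProduct]
      rw [h3]; linarith
    have hxi : 0 < x i := by
      have h := hy2
      have hyb : ⟪y, b⟫_ℝ = -x i := by
        rw [real_inner_comm, hinner]
        have h1 : ∀ l : Fin k, (WithLp.equiv 2 (Fin k → ℝ)) b l
            = -(if l = i then 1 else 0) := fun l => rfl
        simp only [h1, neg_mul, ite_mul, one_mul, zero_mul, Finset.sum_neg_distrib]
        rw [Finset.sum_ite_eq' Finset.univ i x, if_pos (Finset.mem_univ i)]
      rw [hyb] at h
      linarith
    exact ⟨x, hxnn, hBx, Or.inl hxi⟩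



theorem tucker_skew (k : ℕ) (B : Matrix (Fin k) (Fin k) ℝ) (hB : B = -B.transpose) :
    ∃ z : Fin k → ℝ, 0 ≤ z ∧ B.mulVec z ≤ 0 ∧ ∀ i, 0 < z i - B.mulVec z i := by
  choose w hw1 hw2 hw3 using tucker_aux k B hB
  set z : Fin k → ℝ := ∑ i, w i with hz
  have hzl : ∀ l, z l = ∑ i, w i l := fun l => by rw [hz, Finset.sum_apply]
  have hmv : ∀ l, B.mulVec z l = ∑ i, B.mulVec (w i) l := by
    intro l
    have : B.mulVec z = ∑ i, B.mulVec (w i) := by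
      have h := map_sum B.mulVecLin w Finset.univ
      simp only [Matrix.mulVecLin_apply] at h
      exact h
    rw [this, Finset.sum_apply]
  refine ⟨z, ?_, ?_, ?_⟩
  · intro l
    rw [hzl]
    exact Finset.sum_nonneg fun j _ => hw1 j l
  · intro l
    rw [hmv]
    exact Finset.sum_nonpos fun j _ => hw2 j l
  · intro i
    rw [hzl, hmv, ← Finset.sum_sub_distrib]
    refine Finset.sum_pos' (fun j _ => by have := hw1 j i; have := hw2 j i; linarith)
      ⟨i, Finset.mem_univ i, ?_⟩
    rcases hw3 i with h | h
    · have := hw2 i i; linarith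
    · have := hw1 i i; linarith
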